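/- Let n ≥ 3, m ≥ 1, β > 0, and let X_0 = Σ_{k=0}^{n-1} α_k^0 P_k ∈ ℂ^n. Define X(t) = Σ_{k=0}^{n-1} α_k(t) P_k where α_0(t) = α_0^0 and, for k ≥ 1 with |λ_{m,k}| > β²/4, α_k(t) = e^{-βt/2} α_k^0 cos(γ_{m,k} t) with γ_{m,k} = √(-λ_{m,k} - β²/4) (and analogous formulas in the other eigenvalue regimes with zero free constants). Then X solves X'' + βX' = (-1)^{m+1}M^m X with X(0) = X_0, and X(t) → α_0^0 P_0 as t → ∞, i.e., the polygon converges to a single point. -/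

import Mathlib

/-- The discrete Laplacian circulant matrix `circ(-2,1,0,…,0,1)` over `ℂ`. -/
noncomputable def lapM (n : ℕ) [NeZero n] : Matrix (Fin n) (Fin n) ℂ :=
  Matrix.of fun i j =>
    (if j = i + 1 then 1 else 0) + (if j = i - 1 then 1 else 0) + (if j = i then -2 else 0)

/-- The basis polygon `P_k = (1, ω^k, …, ω^{(n-1)k})` with `ω = e^{2πi/n}`. -/
noncomputable def Pvec (n k : ℕ) : Fin n → ℂ :=
  fun j => Complex.exp (2 * (Real.pi : ℂ) * Complex.I * (k : ℂ) * ((j : ℕ) : ℂ) / (n : ℂ))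

open Complex Filter

lemma pvec_pow (n k : ℕ) [NeZero n] (j : Fin n) :
    Pvec n k j = (Complex.exp (2 * (Real.pi:ℂ) * Complex.I * k / n)) ^ (j : ℕ) := by
  rw [Pvec, ← Complex.exp_nat_mul]
  congr 1
  ring

lemma omega_pow_n (n k : ℕ) [NeZero n] :
    (Complex.exp (2 * (Real.pi:ℂ) * Complex.I * k / n)) ^ n = 1 := by
  rw [← Complex.exp_nat_mul]
  have hn : (n : ℂ) ≠ 0 := Nat.cast_ne_zero.2 (NeZero.ne n)
  have : (n:ℂ) * (2 * (Real.pi:ℂ) * Complex.I * k / n) = (k:ℂ) * (2 * Real.pi * Complex.I) := by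
    field_simp
  rw [this]
  exact_mod_cast Complex.exp_int_mul_two_pi_mul_I (k : ℤ)

lemma omega_pow_mod (n k a : ℕ) [NeZero n] :
    (Complex.exp (2 * (Real.pi:ℂ) * Complex.I * k / n)) ^ (a % n) =
    (Complex.exp (2 * (Real.pi:ℂ) * Complex.I * k / n)) ^ a := by
  conv_rhs => rw [← Nat.div_add_mod a n, pow_add, pow_mul, omega_pow_n, one_pow, one_mul]

lemma pvec_succ (n k : ℕ) [NeZero n] (hn : 2 ≤ n) (i : Fin n) :
    Pvec n k (i + 1) = Complex.exp (2 * (Real.pi:ℂ) * Complex.I * k / n) * Pvec n k i := by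
  rw [pvec_pow, pvec_pow]
  have : ((i + 1 : Fin n) : ℕ) = (i.val + 1) % n := by
    simp [Fin.add_def, Nat.one_mod_eq_one.mpr (by omega : n ≠ 1)]
  rw [this, omega_pow_mod, pow_succ, mul_comm]

lemma lapM_mulVec (n k : ℕ) [NeZero n] (hn : 2 ≤ n) :
    (lapM n).mulVec (Pvec n k) =
      (Complex.exp (2 * (Real.pi:ℂ) * Complex.I * k / n)
        + (Complex.exp (2 * (Real.pi:ℂ) * Complex.I * k / n))⁻¹ - 2) • Pvec n k := by
  funext i
  have hne : Complex.exp (2 * (Real.pi:ℂ) * Complex.I * k / n) ≠ 0 := Complex.exp_ne_zero _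
  have hsub : Pvec n k (i - 1) = (Complex.exp (2 * (Real.pi:ℂ) * Complex.I * k / n))⁻¹ * Pvec n k i := by
    have := pvec_succ n k hn (i - 1)
    rw [sub_add_cancel] at this
    field_simp [this]
    rw [this]; ring
  simp only [Matrix.mulVec, dotProduct, lapM, Matrix.of_apply, add_mul, ite_mul, one_mul,
    zero_mul, neg_mul, Finset.sum_add_distrib, Finset.sum_ite_eq', Finset.mem_univ, if_true]
  rw [pvec_succ n k hn, hsub]
  simp only [Pi.smul_apply, smul_eq_mul]
  ring

lemma pow_mulVec_eig {n : ℕ} [Fintype (Fin n)] (M : Matrix (Fin n) (Fin n) ℂ) (μ : ℂ)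
    (v : Fin n → ℂ) (h : M.mulVec v = μ • v) (m : ℕ) :
    (M ^ m).mulVec v = μ ^ m • v := by
  induction m with
  | zero => simp [Matrix.mulVec_one]
  | succ m ih =>
      rw [pow_succ, ← Matrix.mulVec_mulVec, h, Matrix.mulVec_smul, ih, smul_smul, pow_succ]
      ring_nf

lemma mu_eq (n k : ℕ) [NeZero n] :
    Complex.exp (2 * (Real.pi:ℂ) * Complex.I * k / n)
      + (Complex.exp (2 * (Real.pi:ℂ) * Complex.I * k / n))⁻¹ - 2
    = ((-4 * Real.sin (Real.pi * k / n) ^ 2 : ℝ) : ℂ) := by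
  have harg : 2 * (Real.pi:ℂ) * Complex.I * k / n = ((2 * Real.pi * k / n : ℝ) : ℂ) * Complex.I := by
    push_cast; ring
  rw [harg, ← Complex.exp_neg]
  have hcos : Complex.exp (((2 * Real.pi * k / n : ℝ):ℂ) * Complex.I)
      + Complex.exp (-(((2 * Real.pi * k / n : ℝ):ℂ) * Complex.I))
      = 2 * Complex.cos ((2 * Real.pi * k / n : ℝ):ℂ) := by
    rw [Complex.cos]; ring
  rw [hcos, ← Complex.ofReal_cos]
  have : Real.cos (2 * Real.pi * k / n) = 1 - 2 * Real.sin (Real.pi * k / n) ^ 2 := by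
    have := Real.cos_two_mul (Real.pi * k / n)
    have hs := Real.sin_sq_add_cos_sq (Real.pi * k / n)
    have harg2 : 2 * Real.pi * k / n = 2 * (Real.pi * k / n) := by ring
    rw [harg2, this]; nlinarith
  rw [this]; push_cast; ring

lemma tendsto_cexp_zero (r : ℂ) (hr : r.re < 0) :
    Tendsto (fun t : ℝ => Complex.exp (r * t)) atTop (nhds 0) := by
  rw [tendsto_zero_iff_norm_tendsto_zero]
  have : ∀ t : ℝ, ‖Complex.exp (r * t)‖ = Real.exp (r.re * t) := by
    intro t
    rw [Complex.norm_exp]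
    congr 1
    simp [Complex.mul_re]
  simp only [this]
  exact Real.tendsto_exp_atBot.comp (tendsto_id.const_mul_atTop_of_neg hr)

lemma hasDerivAt_cexp_real (r : ℂ) (t : ℝ) :
    HasDerivAt (fun t : ℝ => Complex.exp (r * t)) (r * Complex.exp (r * t)) t := by
  have h1 : HasDerivAt (fun z : ℂ => Complex.exp (r * z)) (r * Complex.exp (r * (t:ℂ))) (t:ℂ) := by
    exact (((hasDerivAt_id (t:ℂ)).const_mul r).cexp).congr_deriv (by simp only [id, mul_one]; ring)
  exact h1.comp_ofReal

/-- The damped flow with zero free constants: the solution with modal coefficients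
`α_0(t) = α⁰_0`, and for `k ≥ 1`, `α_k(t) = e^{-βt/2} α⁰_k cos(γ_{m,k} t)` in the
underdamped regime (with analogous formulas in the other regimes) solves
`X'' + βX' = (-1)^{m+1} M^m X` with `X(0) = X₀`, and `X(t) → α⁰_0 P_0`:
the polygon converges to a single point. -/
theorem damped_general_solution (n m : ℕ) [NeZero n] (hn : 3 ≤ n) (hm : 1 ≤ m)
    (β : ℝ) (hβ : 0 < β) (α0 : ℕ → ℂ)
    (lam γ rp : ℕ → ℝ)
    (hlam : ∀ k, lam k = -(4 : ℝ) ^ m * Real.sin (Real.pi * k / n) ^ (2 * m))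
    (hγ : ∀ k, γ k = Real.sqrt (-lam k - β ^ 2 / 4))
    (hrp : ∀ k, rp k = -β / 2 + Real.sqrt (β ^ 2 / 4 + lam k))
    (α : ℕ → ℝ → ℂ)
    (hα0 : ∀ t : ℝ, α 0 t = α0 0)
    (hαosc : ∀ k, 1 ≤ k → β ^ 2 / 4 < |lam k| →
      ∀ t : ℝ, α k t = Complex.exp (-(β : ℂ) * t / 2) * α0 k * Real.cos (γ k * t))
    (hαcrit : ∀ k, 1 ≤ k → lam k = -β ^ 2 / 4 →
      ∀ t : ℝ, α k t = α0 k * Complex.exp (-(β : ℂ) * t / 2))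
    (hαover : ∀ k, 1 ≤ k → |lam k| < β ^ 2 / 4 →
      ∀ t : ℝ, α k t = α0 k * Complex.exp ((rp k : ℂ) * t))
    (X : ℝ → Fin n → ℂ)
    (hX : ∀ t : ℝ, X t = ∑ k ∈ Finset.range n, α k t • Pvec n k) :
    (∀ t : ℝ, deriv (deriv X) t + β • deriv X t
        = ((-1 : ℂ) ^ (m + 1) • (lapM n) ^ m).mulVec (X t)) ∧
      X 0 = ∑ k ∈ Finset.range n, α0 k • Pvec n k ∧
      Filter.Tendsto X Filter.atTop (nhds (α0 0 • Pvec n 0)) := by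
  have hn2 : 2 ≤ n := by omega
  -- eigenvalue fact
  have heig : ∀ k : ℕ, ((-1 : ℂ) ^ (m + 1) • (lapM n) ^ m).mulVec (Pvec n k)
      = ((lam k : ℝ) : ℂ) • Pvec n k := by
    intro k
    rw [Matrix.smul_mulVec,
      pow_mulVec_eig _ _ _ (by rw [lapM_mulVec n k hn2, mu_eq]) m, smul_smul]
    congr 1
    rw [hlam]
    have hreal : ((-1:ℝ)) ^ (m+1) * (-4 * Real.sin (Real.pi * k / n) ^ 2) ^ m
        = -(4:ℝ) ^ m * Real.sin (Real.pi * k / n) ^ (2*m) := by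
      have h1 : (-4 * Real.sin (Real.pi * k / n) ^ 2 : ℝ) ^ m
          = (-1:ℝ)^m * (4 * Real.sin (Real.pi * k / n)^2)^m := by
        rw [← neg_pow]; ring_nf
      have h2 : ((-1:ℝ))^(m+1) * (-1:ℝ)^m = -1 := by
        rw [← pow_add, show m+1+m = 2*m+1 by ring, pow_succ, pow_mul]; norm_num
      calc ((-1:ℝ)) ^ (m+1) * (-4 * Real.sin (Real.pi * k / n) ^ 2) ^ m
          = (((-1:ℝ))^(m+1) * (-1:ℝ)^m) * (4 * Real.sin (Real.pi * k / n)^2)^m := by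
            rw [h1]; ring
        _ = -(4:ℝ) ^ m * Real.sin (Real.pi * k / n) ^ (2*m) := by
            rw [h2, mul_pow, ← pow_mul]; ring
    calc ((-1:ℂ)) ^ (m+1) * ((-4 * Real.sin (Real.pi * k / n) ^ 2 : ℝ) : ℂ) ^ m
        = ((((-1:ℝ)) ^ (m+1) * (-4 * Real.sin (Real.pi * k / n) ^ 2) ^ m : ℝ) : ℂ) := by
          push_cast; ring
      _ = _ := by rw [hreal]
  have hlamneg : ∀ k, 1 ≤ k → k < n → lam k < 0 := by
    intro k h1 h2
    have hk0 : (0:ℝ) < k := by exact_mod_cast h1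
    have hkn : (k:ℝ) < n := by exact_mod_cast h2
    have hnpos : (0:ℝ) < n := by positivity
    have hs : 0 < Real.sin (Real.pi * k / n) := by
      apply Real.sin_pos_of_pos_of_lt_pi
      · positivity
      · rw [div_lt_iff₀ hnpos]; nlinarith [Real.pi_pos]
    rw [hlam]
    have : 0 < (4:ℝ)^m * Real.sin (Real.pi * k / n) ^ (2*m) := by positivity
    linarith
  -- modal decomposition
  have hmode : ∀ k : ℕ, ∃ A B r s : ℂ, k < n →
      ((∀ t : ℝ, α k t = A * Complex.exp (r*t) + B * Complex.exp (s*t)) ∧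
       r^2 + (β:ℂ)*r = ((lam k : ℝ):ℂ) ∧ s^2 + (β:ℂ)*s = ((lam k : ℝ):ℂ) ∧
       α k 0 = α0 k ∧ (1 ≤ k → r.re < 0 ∧ s.re < 0)) := by
    intro k
    by_cases hkn : k < n
    swap
    · exact ⟨0, 0, 0, 0, fun h => absurd h hkn⟩
    rcases Nat.eq_zero_or_pos k with rfl | hk1
    · refine ⟨α0 0, 0, 0, 0, fun _ =>
        ⟨fun t => by simp [hα0 t], ?_, ?_, hα0 0, fun h => by omega⟩⟩ <;>
      · rw [hlam]
        simp [zero_pow (by omega : 2*m ≠ 0)]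
    have hln : lam k < 0 := hlamneg k hk1 hkn
    have habs : |lam k| = -lam k := abs_of_neg hln
    rcases lt_trichotomy |lam k| (β^2/4) with h|h|h
    · -- overdamped
      have hargpos : 0 ≤ β^2/4 + lam k := by rw [habs] at h; linarith
      have hsq2 : Real.sqrt (β^2/4 + lam k)^2 = β^2/4 + lam k := Real.sq_sqrt hargpos
      have hrpeq : rp k^2 + β * rp k = lam k := by rw [hrp]; nlinarith [hsq2]
      have hrpneg : rp k < 0 := by
        have h1 : Real.sqrt (β^2/4+lam k) < Real.sqrt (β^2/4) :=
          Real.sqrt_lt_sqrt hargpos (by linarith)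
        have h2 : Real.sqrt (β^2/4) = β/2 := by
          rw [show (β^2/4 : ℝ) = (β/2)^2 by ring]
          exact Real.sqrt_sq (by linarith)
        rw [hrp]; linarith
      refine ⟨α0 k, 0, (rp k : ℂ), (rp k : ℂ), fun _ =>
        ⟨fun t => by rw [hαover k hk1 h t]; ring, ?_, ?_,
         by rw [hαover k hk1 h 0]; simp, fun _ => by constructor <;> simpa using hrpneg⟩⟩ <;>
      exact_mod_cast hrpeq
    · -- critical
      have hl : lam k = -β^2/4 := by rw [habs] at h; linarith
      refine ⟨α0 k, 0, ((-β/2 : ℝ):ℂ), ((-β/2 : ℝ):ℂ), fun _ =>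
        ⟨fun t => ?_, ?_, ?_, by rw [hαcrit k hk1 hl 0]; simp,
         fun _ => by constructor <;> · simp; linarith⟩⟩
      · rw [hαcrit k hk1 hl t,
          show (((-β/2:ℝ):ℂ))*t = -(β:ℂ)*t/2 by push_cast; ring]
        ring
      all_goals rw [hl]; push_cast; ring
    · -- oscillatory
      have hlt : lam k < -β^2/4 := by rw [habs] at h; linarith
      have hγ2 : γ k^2 = -lam k - β^2/4 := by rw [hγ]; exact Real.sq_sqrt (by linarith)
      have hγ2C : ((γ k:ℝ):ℂ)^2 = -((lam k:ℝ):ℂ) - (β:ℂ)^2/4 := by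
        rw [← Complex.ofReal_pow, hγ2]; push_cast; ring
      refine ⟨α0 k/2, α0 k/2, ((-β/2:ℝ):ℂ) + (γ k:ℝ) * Complex.I,
        ((-β/2:ℝ):ℂ) - (γ k:ℝ) * Complex.I, fun _ =>
        ⟨fun t => ?_, ?_, ?_, by rw [hαosc k hk1 h 0]; simp, fun _ => ?_⟩⟩
      · rw [hαosc k hk1 h t, Complex.ofReal_cos, Complex.cos,
          show (((-β/2:ℝ):ℂ) + (γ k:ℝ)*Complex.I)*t
            = -(β:ℂ)*t/2 + ((γ k * t : ℝ):ℂ)*Complex.I by push_cast; ring,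
          show (((-β/2:ℝ):ℂ) - (γ k:ℝ)*Complex.I)*t
            = -(β:ℂ)*t/2 + -(((γ k * t : ℝ):ℂ)*Complex.I) by push_cast; ring,
          Complex.exp_add, Complex.exp_add]
        ring
      · have e : (((-β/2:ℝ):ℂ) + (γ k:ℝ)*Complex.I)^2
            + (β:ℂ)*(((-β/2:ℝ):ℂ) + (γ k:ℝ)*Complex.I)
            = -(β:ℂ)^2/4 + ((γ k:ℝ):ℂ)^2 * Complex.I^2 := by push_cast; ring
        rw [e, Complex.I_sq, hγ2C]; ring
      · have e : (((-β/2:ℝ):ℂ) - (γ k:ℝ)*Complex.I)^2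
            + (β:ℂ)*(((-β/2:ℝ):ℂ) - (γ k:ℝ)*Complex.I)
            = -(β:ℂ)^2/4 + ((γ k:ℝ):ℂ)^2 * Complex.I^2 := by push_cast; ring
        rw [e, Complex.I_sq, hγ2C]; ring
      · constructor <;> · simp; linarith
  choose A B r s hABrs using hmode
  have hform : ∀ k, k < n → ∀ t:ℝ,
      α k t = A k * Complex.exp (r k * t) + B k * Complex.exp (s k * t) :=
    fun k hk => (hABrs k hk).1
  have hre1 : ∀ k, k < n → r k^2 + (β:ℂ)*r k = ((lam k:ℝ):ℂ) := fun k hk => (hABrs k hk).2.1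
  have hse1 : ∀ k, k < n → s k^2 + (β:ℂ)*s k = ((lam k:ℝ):ℂ) := fun k hk => (hABrs k hk).2.2.1
  have hre : ∀ k, k < n → 1 ≤ k → (r k).re < 0 ∧ (s k).re < 0 :=
    fun k hk => (hABrs k hk).2.2.2.2
  have hXeq : X = fun t : ℝ => ∑ k ∈ Finset.range n,
      (A k * Complex.exp (r k*(t:ℂ)) + B k * Complex.exp (s k*(t:ℂ))) • Pvec n k := by
    funext t; rw [hX t]
    exact Finset.sum_congr rfl fun k hk => by rw [hform k (Finset.mem_range.1 hk) t]
  have hD1 : ∀ t : ℝ, HasDerivAt X (∑ k ∈ Finset.range n,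
      (A k * (r k * Complex.exp (r k*(t:ℂ))) + B k * (s k * Complex.exp (s k*(t:ℂ)))) • Pvec n k) t := by
    intro t; rw [hXeq]
    exact HasDerivAt.fun_sum fun k hk =>
      (((hasDerivAt_cexp_real (r k) t).const_mul (A k)).add
        ((hasDerivAt_cexp_real (s k) t).const_mul (B k))).smul_const _
  have hd1 : deriv X = fun t : ℝ => ∑ k ∈ Finset.range n,
      (A k * (r k * Complex.exp (r k*(t:ℂ))) + B k * (s k * Complex.exp (s k*(t:ℂ)))) • Pvec n k :=
    funext fun t => (hD1 t).deriv
  have hd2 : ∀ t : ℝ, deriv (deriv X) t = ∑ k ∈ Finset.range n,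
      (A k * (r k * (r k * Complex.exp (r k*(t:ℂ)))) + B k * (s k * (s k * Complex.exp (s k*(t:ℂ))))) • Pvec n k := by
    intro t
    rw [hd1]
    refine HasDerivAt.deriv ?_
    exact HasDerivAt.fun_sum fun k hk =>
      ((((hasDerivAt_cexp_real (r k) t).const_mul (r k)).const_mul (A k)).add
        ((((hasDerivAt_cexp_real (s k) t).const_mul (s k)).const_mul (B k)))).smul_const _
  refine ⟨?_, ?_, ?_⟩
  · intro t
    rw [hd2, hd1, hX t]
    have hrhs : ((-1:ℂ)^(m+1) • (lapM n)^m).mulVec (∑ k ∈ Finset.range n, α k t • Pvec n k)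
        = ∑ k ∈ Finset.range n, α k t • (((lam k:ℝ):ℂ) • Pvec n k) := by
      rw [← Matrix.mulVecLin_apply, map_sum]
      refine Finset.sum_congr rfl fun k hk => ?_
      rw [map_smul, Matrix.mulVecLin_apply, heig k]
    rw [hrhs, Finset.smul_sum, ← Finset.sum_add_distrib]
    refine Finset.sum_congr rfl fun k hk => ?_
    have hk' := Finset.mem_range.1 hk
    rw [hform k hk' t]
    have h1 : β • ((A k * (r k * Complex.exp (r k*(t:ℂ))) + B k * (s k * Complex.exp (s k*(t:ℂ)))) • Pvec n k)
        = ((β:ℂ) * (A k * (r k * Complex.exp (r k*(t:ℂ))) + B k * (s k * Complex.exp (s k*(t:ℂ))))) • Pvec n k := by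
      rw [← smul_assoc]
      congr 1
    rw [h1, ← add_smul, smul_smul]
    congr 1
    linear_combination (A k * Complex.exp (r k*(t:ℂ))) * (hre1 k hk')
      + (B k * Complex.exp (s k*(t:ℂ))) * (hse1 k hk')
  · rw [hX 0]
    exact Finset.sum_congr rfl fun k hk => by
      rw [(hABrs k (Finset.mem_range.1 hk)).2.2.2.1]
  · have hX' : X = fun t => α 0 t • Pvec n 0 + ∑ k ∈ Finset.Ico 1 n, α k t • Pvec n k := by
      funext t
      rw [hX t, Finset.range_eq_Ico, Finset.sum_eq_sum_Ico_succ_bot (by omega : 0 < n)]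
    rw [hX']
    have h0 : Filter.Tendsto (fun t:ℝ => α 0 t • Pvec n 0) Filter.atTop (nhds (α0 0 • Pvec n 0)) := by
      simp only [hα0]; exact tendsto_const_nhds
    have hsum : Filter.Tendsto (fun t:ℝ => ∑ k ∈ Finset.Ico 1 n, α k t • Pvec n k)
        Filter.atTop (nhds 0) := by
      have hterm : ∀ k ∈ Finset.Ico 1 n, Filter.Tendsto (fun t:ℝ => α k t • Pvec n k)
          Filter.atTop (nhds 0) := by
        intro k hk
        obtain ⟨hk1, hk2⟩ := Finset.mem_Ico.1 hk
        have hrk := (hre k hk2 hk1).1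
        have hsk := (hre k hk2 hk1).2
        have hαt : Filter.Tendsto (α k) Filter.atTop (nhds 0) := by
          have h2 := ((tendsto_cexp_zero (r k) hrk).const_mul (A k)).add
            ((tendsto_cexp_zero (s k) hsk).const_mul (B k))
          simp only [mul_zero, add_zero] at h2
          exact h2.congr fun t => (hform k hk2 t).symm
        simpa using hαt.smul_const (Pvec n k)
      have := tendsto_finset_sum (Finset.Ico 1 n) hterm
      simpa using this
    simpa using h0.add hsum
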